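/- Let P₁(t),…,P_J(t) be pairwise relatively prime reciprocal polynomials and P = ∏ P_j. Then the canonical map OA/I_{P} → ∏_j OA/I_{P_j} induced by the projections is a Lie algebra isomorphism. -/

import Mathlib

open LaurentPolynomial

noncomputable section

namespace Onsager

attribute [local instance 100] LieRing.ofAssociativeRing

/-- Laurent polynomials over ℂ, i.e. the ring `ℂ[t,t⁻¹]`. -/
abbrev R : Type := LaurentPolynomial ℂ

/-- The involution `t ↦ t⁻¹` of `ℂ[t,t⁻¹]`. -/
abbrev inv : R ≃ₐ[ℂ] R := LaurentPolynomial.invert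

/-- The loop algebra of `gl₂`: 2×2 matrices over `ℂ[t,t⁻¹]`.  The loop algebra
`L(sl₂) = ℂ[t,t⁻¹] ⊗ sl₂` is its Lie subalgebra of traceless matrices. -/
abbrev Loop : Type := Matrix (Fin 2) (Fin 2) R

/-- The standard generator `e` of `sl₂`, viewed inside the loop algebra. -/
def e : Loop := !![0, 1; 0, 0]
/-- The standard generator `f` of `sl₂`. -/
def f : Loop := !![0, 0; 1, 0]
/-- The standard generator `h` of `sl₂`. -/
def h : Loop := !![1, 0; 0, -1]

/-- The element `p(t)e + q(t)f + r(t)h` of the loop algebra. -/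
def elt (p q r : R) : Loop := p • e + q • f + r • h

lemma elt_eq (p q r : R) : elt p q r = !![r, p; q, -r] := by
  ext i j
  fin_cases i <;> fin_cases j <;> simp [elt, e, f, h]

/-- The swap matrix implementing the involution `θ` of `sl₂`. -/
def Sw : Loop := !![0, 1; 1, 0]

/-- The involution `θ̂` of the loop algebra, `θ̂(p(t) ⊗ x) = p(t⁻¹) ⊗ θ(x)`,
where `θ(e) = f`, `θ(f) = e`, `θ(h) = -h`. -/
def thetaHat (x : Loop) : Loop := Sw * x.map inv * Sw

lemma Sw_mul_Sw : Sw * Sw = 1 := by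
  ext i j
  fin_cases i <;> fin_cases j <;>
    simp [Sw, Matrix.mul_apply, Fin.sum_univ_two, Matrix.one_apply]

lemma map_inv_eq (x : Loop) : x.map inv = (AlgEquiv.mapMatrix (R := ℂ) inv) x := rfl

lemma thetaHat_mul (x y : Loop) : thetaHat (x * y) = thetaHat x * thetaHat y := by
  simp only [thetaHat, map_inv_eq, map_mul]
  calc Sw * (inv.mapMatrix x * inv.mapMatrix y) * Sw
      = Sw * inv.mapMatrix x * (Sw * Sw) * (inv.mapMatrix y * Sw) := by
        rw [Sw_mul_Sw]; noncomm_ring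
    _ = Sw * inv.mapMatrix x * Sw * (Sw * (inv.mapMatrix y * Sw)) := by noncomm_ring
    _ = _ := by noncomm_ring

lemma thetaHat_add (x y : Loop) : thetaHat (x + y) = thetaHat x + thetaHat y := by
  simp only [thetaHat, map_inv_eq, map_add, mul_add, add_mul]

lemma thetaHat_sub (x y : Loop) : thetaHat (x - y) = thetaHat x - thetaHat y := by
  simp only [thetaHat, map_inv_eq, map_sub, mul_sub, sub_mul]

lemma thetaHat_smul (c : ℂ) (x : Loop) : thetaHat (c • x) = c • thetaHat x := by
  simp only [thetaHat, map_inv_eq, map_smul, Matrix.smul_mul, Matrix.mul_smul]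

/-- The Onsager algebra, realized as the subalgebra of the loop algebra of `sl₂`
fixed by the involution `θ̂`. -/
def OASub : LieSubalgebra ℂ Loop where
  carrier := {x | thetaHat x = x ∧ Matrix.trace x = 0}
  add_mem' := by
    rintro x y ⟨hx1, hx2⟩ ⟨hy1, hy2⟩
    exact ⟨by rw [thetaHat_add, hx1, hy1], by simp [hx2, hy2]⟩
  zero_mem' := by
    constructor
    · have := thetaHat_smul 0 0
      simpa using this
    · simp
  smul_mem' := by
    rintro c x ⟨hx1, hx2⟩
    exact ⟨by rw [thetaHat_smul, hx1], by simp [hx2]⟩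
  lie_mem' := by
    rintro x y ⟨hx1, hx2⟩ ⟨hy1, hy2⟩
    constructor
    · rw [Ring.lie_def, thetaHat_sub, thetaHat_mul, thetaHat_mul, hx1, hy1]
    · rw [Ring.lie_def]
      simp [Matrix.trace_mul_comm x y]

/-- The Onsager algebra as a type (a Lie algebra over ℂ). -/
abbrev OA : Type := ↥OASub

/-- For a polynomial `P(t)`, the ideal `I_P` of the Onsager algebra consisting of the
elements `p(t)e + p(t⁻¹)f + q(t)h` with `P | p` and `P | q`. -/
def IP (P : Polynomial ℂ) : LieIdeal ℂ OA where
  carrier := {X | ∀ i j, P.toLaurent ∣ (X : Loop) i j}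
  add_mem' := by
    intro x y hx hy i j
    simpa using dvd_add (hx i j) (hy i j)
  zero_mem' := by intro i j; simp
  smul_mem' := by
    intro c x hx i j
    have : ((c • x : OA) : Loop) i j = c • ((x : Loop) i j) := rfl
    rw [this, Algebra.smul_def]
    exact (hx i j).mul_left _
  lie_mem := by
    intro x m hm i j
    have hco : ((⁅x, m⁆ : OA) : Loop) = ⁅(x : Loop), (m : Loop)⁆ := rfl
    rw [hco, Ring.lie_def]
    have h1 : P.toLaurent ∣ ((x : Loop) * (m : Loop)) i j := by
      rw [Matrix.mul_apply]
      exact Finset.dvd_sum fun k _ => (hm k j).mul_left _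
    have h2 : P.toLaurent ∣ ((m : Loop) * (x : Loop)) i j := by
      rw [Matrix.mul_apply]
      exact Finset.dvd_sum fun k _ => (hm i k).mul_right _
    simpa using dvd_sub h1 h2

/-- A nonconstant monic polynomial `P` of degree `d` is *reciprocal* if
`P(t) = ± t^d P(t⁻¹)`. -/
def IsReciprocal (P : Polynomial ℂ) : Prop :=
  P.Monic ∧ 0 < P.natDegree ∧
    (P.toLaurent = T (P.natDegree : ℤ) * inv P.toLaurent ∨
     P.toLaurent = -(T (P.natDegree : ℤ) * inv P.toLaurent))

/-- The elementary reciprocal polynomial `U_a`. -/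
def U (a : ℂ) : Polynomial ℂ :=
  if a = 1 ∨ a = -1 then Polynomial.X - Polynomial.C a
  else Polynomial.X ^ 2 - Polynomial.C (a + a⁻¹) * Polynomial.X + 1

/-- Evaluation of a Laurent polynomial at a nonzero complex number. -/
def evalL (a : ℂ) (p : R) : ℂ := p.coeff.sum fun n c => c * a ^ n

/-- Evaluation `ev_a` of loop-algebra elements at `t = a`. -/
def ev (a : ℂ) (x : Loop) : Matrix (Fin 2) (Fin 2) ℂ := x.map (evalL a)

/-- The element `A_m = 2t^m e + 2t^{-m} f` of the loop algebra. -/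
def AmL (m : ℤ) : Loop := elt (2 * T m) (2 * T (-m)) 0

/-- The element `G_m = (t^m - t^{-m}) h` of the loop algebra. -/
def GmL (m : ℤ) : Loop := elt 0 0 (T m - T (-m))

lemma thetaHat_elt (p q r : R) :
    thetaHat (elt p q r) = elt (inv q) (inv p) (-(inv r)) := by
  rw [elt_eq, elt_eq]
  have hmap : (!![r, p; q, -r] : Loop).map ⇑inv = !![inv r, inv p; inv q, -(inv r)] := by
    ext i j
    fin_cases i <;> fin_cases j <;> simp [Matrix.map_apply]
  rw [thetaHat, hmap, Sw]
  ext i j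
  fin_cases i <;> fin_cases j <;>
    simp [Matrix.mul_apply, Fin.sum_univ_two]

lemma elt_mem (p r : R) (hr : inv r = -r) : elt p (inv p) r ∈ OASub := by
  constructor
  · rw [thetaHat_elt, hr, neg_neg, LaurentPolynomial.involutive_invert p]
  · rw [elt_eq]
    simp [Matrix.trace_fin_two]

/-- `A_m` as an element of the Onsager algebra. -/
def Am (m : ℤ) : OA :=
  ⟨AmL m, by
    have h2 : inv (2 * T m : R) = 2 * T (-m) := by simp [map_ofNat]
    have hm := elt_mem (2 * T m) 0 (by simp)
    rw [h2] at hm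
    exact hm⟩

/-- `G_m` as an element of the Onsager algebra. -/
def Gm (m : ℤ) : OA :=
  ⟨GmL m, by
    have hm := elt_mem 0 (T m - T (-m)) (by simp [neg_sub])
    rw [map_zero] at hm
    exact hm⟩

/- ### Auxiliary lemmas for the Chinese remainder theorem -/

lemma mem_IP {Q : Polynomial ℂ} {X : OA} :
    X ∈ IP Q ↔ ∀ i j, Q.toLaurent ∣ (X : Loop) i j := Iff.rfl

lemma dvd_invert_self {Q : Polynomial ℂ} (hQ : IsReciprocal Q) :
    Q.toLaurent ∣ (inv Q.toLaurent : R) := by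
  rcases hQ.2.2 with hq | hq
  · have h2 : (inv Q.toLaurent : R) = T (-(Q.natDegree : ℤ)) * Q.toLaurent := by
      conv_lhs => rw [hq]
      rw [map_mul, invert_T, LaurentPolynomial.involutive_invert]
    exact ⟨T (-(Q.natDegree : ℤ)), by rw [h2, mul_comm]⟩
  · have h2 : (inv Q.toLaurent : R) = -(T (-(Q.natDegree : ℤ)) * Q.toLaurent) := by
      conv_lhs => rw [hq]
      rw [map_neg, map_mul, invert_T, LaurentPolynomial.involutive_invert]
    exact ⟨-T (-(Q.natDegree : ℤ)), by rw [h2]; ring⟩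

lemma dvd_invert {Q : Polynomial ℂ} (hQ : IsReciprocal Q) {x : R}
    (h : Q.toLaurent ∣ x) : Q.toLaurent ∣ inv x := by
  obtain ⟨c, rfl⟩ := h
  rw [map_mul]
  exact (dvd_invert_self hQ).mul_right _

/-- Partition of unity: a symmetric Laurent polynomial congruent to 1 mod `P j`
and to 0 mod `P k` for `k ≠ j`. -/
lemma exists_symm_idem (J : ℕ) (P : Fin J → Polynomial ℂ)
    (hrec : ∀ j, IsReciprocal (P j))
    (hcop : ∀ j k, j ≠ k → IsCoprime (P j) (P k)) (j : Fin J) :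
    ∃ s : R, inv s = s ∧ (P j).toLaurent ∣ s - 1 ∧
      ∀ k, k ≠ j → (P k).toLaurent ∣ s := by
  classical
  set Q : Polynomial ℂ := ∏ k ∈ Finset.univ.erase j, P k with hQdef
  have hQ : IsCoprime (P j) Q :=
    IsCoprime.prod_right fun k hk => hcop j k (Finset.ne_of_mem_erase hk).symm
  obtain ⟨a, b, hab⟩ := hQ
  set u : R := Polynomial.toLaurent (b * Q) with hudef
  have hu1 : (P j).toLaurent ∣ u - 1 := by
    refine ⟨Polynomial.toLaurent (-a), ?_⟩
    have : b * Q - 1 = P j * -a := by linear_combination hab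
    rw [hudef, ← map_one Polynomial.toLaurent, ← map_sub, this, map_mul]
  have hu0 : ∀ k, k ≠ j → (P k).toLaurent ∣ u := by
    intro k hk
    have : P k ∣ b * Q := by
      exact Dvd.dvd.mul_left
        (Finset.dvd_prod_of_mem _ (Finset.mem_erase.mpr ⟨hk, Finset.mem_univ k⟩)) b
    exact (Polynomial.toLaurent.map_dvd this)
  refine ⟨u + inv u - u * inv u, ?_, ?_, ?_⟩
  · simp only [map_sub, map_add, map_mul, LaurentPolynomial.involutive_invert u]
    ring
  · have hinv : (P j).toLaurent ∣ inv u - 1 := by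
      have := dvd_invert (hrec j) hu1
      rwa [map_sub, map_one] at this
    have : u + inv u - u * inv u - 1 = (1 - u) * (inv u - 1) := by ring
    rw [this]
    exact Dvd.dvd.mul_left hinv _
  · intro k hk
    have h1 := hu0 k hk
    have h2 : (P k).toLaurent ∣ inv u := dvd_invert (hrec k) h1
    exact dvd_sub (dvd_add h1 h2) (h1.mul_right _)

/-- Multiplication by a symmetric Laurent polynomial preserves the Onsager algebra. -/
lemma smul_mem_OASub (s : R) (hs : inv s = s) {x : Loop} (hx : x ∈ OASub) :
    s • x ∈ OASub := by
  obtain ⟨hx1, hx2⟩ := hx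
  constructor
  · have hmap : (s • x).map ⇑inv = inv s • x.map ⇑inv := by
      ext i j
      simp [Matrix.map_apply, Matrix.smul_apply, smul_eq_mul, map_mul]
    rw [thetaHat, hmap, Matrix.mul_smul, Matrix.smul_mul, hs]
    exact congrArg _ hx1
  · rw [Matrix.trace_smul, hx2, smul_zero]

open scoped DirectSum in
/-- **Chinese remainder for the Onsager algebra.**  If `P₁, …, P_J` are pairwise
relatively prime reciprocal polynomials and `P = ∏ Pⱼ`, then the canonical map
`OA/I_P → ∏ⱼ OA/I_{Pⱼ}` induced by the projections is a Lie algebra isomorphism. -/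
theorem quotient_product_decomposition (J : ℕ) (P : Fin J → Polynomial ℂ)
    (hrec : ∀ j, IsReciprocal (P j))
    (hcop : ∀ j k, j ≠ k → IsCoprime (P j) (P k)) :
    ∃ eqv : (OA ⧸ IP (∏ j, P j)) ≃ₗ⁅ℂ⁆ (⨁ j : Fin J, OA ⧸ IP (P j)),
      ∀ (X : OA) (j : Fin J),
        (eqv (LieSubmodule.Quotient.mk (N := IP (∏ j, P j)) X)) j =
          LieSubmodule.Quotient.mk (N := IP (P j)) X := by
  classical
  -- The canonical linear map `OA → Π j, OA ⧸ IP (P j)`.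
  set φ : OA →ₗ[ℂ] ∀ j : Fin J, OA ⧸ IP (P j) :=
    LinearMap.pi (fun j => ((IP (P j)).toSubmodule).mkQ) with hφdef
  have hφ_apply : ∀ (X : OA) (j : Fin J),
      φ X j = LieSubmodule.Quotient.mk (N := IP (P j)) X := fun X j => rfl
  -- kernel computation
  have hker : LinearMap.ker φ = (IP (∏ j, P j)).toSubmodule := by
    ext X
    simp only [LinearMap.mem_ker, LieSubmodule.mem_toSubmodule]
    constructor
    · intro hX
      have hXj : ∀ j : Fin J, X ∈ IP (P j) := by
        intro j
        have : φ X j = 0 := by rw [hX]; rfl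
        exact (Submodule.Quotient.mk_eq_zero _).mp this
      rw [mem_IP]
      intro i j
      have hprod : (∏ k, P k).toLaurent = ∏ k, (P k).toLaurent := map_prod _ _ _
      rw [hprod]
      exact Fintype.prod_dvd_of_coprime
        (fun a b hab => (hcop a b hab).map Polynomial.toLaurent)
        (fun k => hXj k i j)
    · intro hX
      have hXj : ∀ j : Fin J, X ∈ IP (P j) := by
        intro j i k
        refine dvd_trans ?_ (hX i k)
        have hprod : (∏ m, P m).toLaurent = ∏ m, (P m).toLaurent := map_prod _ _ _
        rw [hprod]
        exact Finset.dvd_prod_of_mem _ (Finset.mem_univ j)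
      funext j
      exact (Submodule.Quotient.mk_eq_zero _).mpr (hXj j)
  -- surjectivity
  have hsurj : Function.Surjective φ := by
    intro y
    choose X hX using fun j => Submodule.Quotient.mk_surjective
      ((IP (P j)).toSubmodule) (y j)
    choose s hs1 hs2 hs3 using exists_symm_idem J P hrec hcop
    have hmem : ∑ k, s k • ((X k : OA) : Loop) ∈ OASub :=
      sum_mem fun k _ => smul_mem_OASub (s k) (hs1 k) (X k).2
    refine ⟨⟨∑ k, s k • ((X k : OA) : Loop), hmem⟩, ?_⟩
    funext j
    rw [hφ_apply, ← hX j]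
    refine (Submodule.Quotient.eq _).mpr ?_
    rw [LieSubmodule.mem_toSubmodule, mem_IP]
    intro i m
    have hentry : ((((⟨∑ k, s k • ((X k : OA) : Loop), hmem⟩ : OA) : OA) - X j : OA) : Loop) i m
        = (∑ k, s k * ((X k : Loop) i m)) - (X j : Loop) i m := by
      simp [Matrix.sub_apply, Matrix.sum_apply, Matrix.smul_apply, smul_eq_mul]
    rw [hentry, ← Finset.add_sum_erase Finset.univ _ (Finset.mem_univ j)]
    have hring : s j * ((X j : Loop) i m) +
        (∑ k ∈ Finset.univ.erase j, s k * ((X k : Loop) i m)) - (X j : Loop) i m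
      = (s j - 1) * ((X j : Loop) i m) +
        ∑ k ∈ Finset.univ.erase j, s k * ((X k : Loop) i m) := by ring
    rw [hring]
    refine dvd_add ((hs2 j).mul_right _) (Finset.dvd_sum fun k hk => ?_)
    exact (hs3 k j (Finset.ne_of_mem_erase hk).symm).mul_right _
  -- build the linear equivalence
  have hle : (IP (∏ j, P j)).toSubmodule ≤ LinearMap.ker φ := hker.ge
  set g : (OA ⧸ IP (∏ j, P j)) →ₗ[ℂ] ∀ j : Fin J, OA ⧸ IP (P j) :=
    ((IP (∏ j, P j)).toSubmodule).liftQ φ hle with hgdef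
  have hg_mk : ∀ X : OA, g (LieSubmodule.Quotient.mk (N := IP (∏ j, P j)) X) = φ X :=
    fun X => rfl
  have hg_bij : Function.Bijective g := by
    constructor
    · rw [← LinearMap.ker_eq_bot]
      exact Submodule.ker_liftQ_eq_bot _ _ _ hker.le
    · intro y
      obtain ⟨x, hx⟩ := hsurj y
      exact ⟨Submodule.Quotient.mk x, hx⟩
  set ψ := (DirectSum.linearEquivFunOnFintype ℂ (Fin J)
    (fun j => OA ⧸ IP (P j))).symm with hψdef
  set eL : (OA ⧸ IP (∏ j, P j)) ≃ₗ[ℂ] ⨁ j : Fin J, OA ⧸ IP (P j) :=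
    (LinearEquiv.ofBijective g hg_bij).trans ψ with heLdef
  have heval : ∀ (X : OA) (j : Fin J),
      eL (LieSubmodule.Quotient.mk (N := IP (∏ j, P j)) X) j
        = LieSubmodule.Quotient.mk (N := IP (P j)) X := fun X j => rfl
  have heval' : ∀ (q : OA ⧸ IP (∏ j, P j)) (j : Fin J), eL q j = g q j :=
    fun q j => rfl
  have hlie : ∀ x y : OA ⧸ IP (∏ j, P j), eL ⁅x, y⁆ = ⁅eL x, eL y⁆ := by
    intro x y
    have mksurj : Function.Surjective
        (fun X : OA => (LieSubmodule.Quotient.mk (N := IP (∏ j, P j)) X :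
          OA ⧸ IP (∏ j, P j))) := Submodule.Quotient.mk_surjective _
    obtain ⟨X, rfl⟩ := mksurj x
    obtain ⟨Y, rfl⟩ := mksurj y
    have hb : (⁅(LieSubmodule.Quotient.mk (N := IP (∏ j, P j)) X :
          OA ⧸ IP (∏ j, P j)),
        (LieSubmodule.Quotient.mk (N := IP (∏ j, P j)) Y : OA ⧸ IP (∏ j, P j))⁆)
        = LieSubmodule.Quotient.mk (N := IP (∏ j, P j)) ⁅X, Y⁆ :=
      rfl
    show eL ⁅_, _⁆ = _
    rw [hb]
    refine DFunLike.ext _ _ fun j => ?_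
    rw [DirectSum.bracket_apply]
    have h1 := heval ⁅X, Y⁆ j
    have h2 := heval X j
    have h3 := heval Y j
    rw [h1, h2, h3]
    rfl
  refine ⟨⟨⟨eL.toLinearMap, hlie _ _⟩, eL.symm, eL.left_inv, eL.right_inv⟩, heval⟩

end Onsager
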